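/- Let V be a nonzero finite-dimensional complex inner product space, and let A and B be unitary operators on V satisfying A ∘ B = ω · (B ∘ A), where ω = exp(2πi·p/q) with p and q coprime integers and q ≥ 1. Then q divides dim V. -/

import Mathlib

/-- Magnetic translation algebra forces degeneracy: if `A`, `B` are unitary operators on a
nonzero finite-dimensional complex inner product space `V` with `A ∘ B = ω·(B ∘ A)`, where
`ω = exp(2πi·p/q)` for coprime integers `p`, `q` with `q ≥ 1`, then `q` divides `dim V`. -/
theorem magnetic_translation_forces_degeneracy
    {V : Type*} [NormedAddCommGroup V] [InnerProductSpace ℂ V]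
    [FiniteDimensional ℂ V] [Nontrivial V]
    (A B : V ≃ₗᵢ[ℂ] V) (p : ℤ) (q : ℕ) (hq : 1 ≤ q) (hcop : Int.gcd p (q : ℤ) = 1)
    (hAB : ∀ x : V, A (B x) =
      Complex.exp (2 * Real.pi * Complex.I * ((p : ℂ) / (q : ℂ))) • B (A x)) :
    q ∣ Module.finrank ℂ V := by
  set n := Module.finrank ℂ V with hn
  set ω : ℂ := Complex.exp (2 * Real.pi * Complex.I * ((p : ℂ) / (q : ℂ))) with hω
  have hq0 : (q : ℂ) ≠ 0 := by exact_mod_cast Nat.one_le_iff_ne_zero.mp hq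
  set fA : V →ₗ[ℂ] V := (A.toLinearEquiv : V →ₗ[ℂ] V)
  set fB : V →ₗ[ℂ] V := (B.toLinearEquiv : V →ₗ[ℂ] V)
  have hmap : fA ∘ₗ fB = ω • (fB ∘ₗ fA) := by
    ext x
    exact hAB x
  have hdet : LinearMap.det (fA ∘ₗ fB) = ω ^ n * LinearMap.det (fB ∘ₗ fA) := by
    rw [hmap, LinearMap.det_smul]
  rw [LinearMap.det_comp, LinearMap.det_comp] at hdet
  have hA : LinearMap.det fA ≠ 0 := (A.toLinearEquiv.isUnit_det').ne_zero
  have hB : LinearMap.det fB ≠ 0 := (B.toLinearEquiv.isUnit_det').ne_zero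
  have hωn : ω ^ n = 1 := by
    have hBA : LinearMap.det fB * LinearMap.det fA ≠ 0 := mul_ne_zero hB hA
    apply mul_right_cancel₀ hBA
    rw [one_mul]
    linear_combination -hdet
  have hexp : Complex.exp ((n : ℂ) * (2 * Real.pi * Complex.I * ((p : ℂ) / (q : ℂ)))) = 1 := by
    rw [Complex.exp_nat_mul, ← hω, hωn]
  rw [Complex.exp_eq_one_iff] at hexp
  obtain ⟨k, hk⟩ := hexp
  have hπ : (2 : ℂ) * Real.pi * Complex.I ≠ 0 := by
    simp [Real.pi_ne_zero, Complex.I_ne_zero]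
  have hnp : (n : ℂ) * p = k * q := by
    have h2 : (n : ℂ) * ((p : ℂ) / (q : ℂ)) = k := by
      apply mul_left_cancel₀ hπ
      linear_combination hk
    field_simp at h2
    linear_combination h2
  have hz : (n : ℤ) * p = k * q := by exact_mod_cast hnp
  have hdvd : (q : ℤ) ∣ (n : ℤ) * p := ⟨k, by linarith [hz]⟩
  have : (q : ℤ) ∣ (n : ℤ) := by
    have hcop' : IsCoprime (q : ℤ) p := by
      rw [Int.isCoprime_iff_gcd_eq_one, Int.gcd_comm]
      exact hcop
    exact hcop'.dvd_of_dvd_mul_right hdvd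
  exact_mod_cast this
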